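/- Let G be an embedded graph and k a natural number. Then k^{c(G)} · R(G; k+1, k, 1/k) = Σ_{φ ∈ R(G_m,k)} 2^{total(φ)}, where the sum is over all R-permissible k-valuations of the canonically checkerboard coloured medial graph G_m. -/
import Mathlib


/-!
A flag (graph-encoded map) model of ribbon graphs / cellularly embedded graphs,
together with the graph polynomials studied by Ellis-Monaghan and Moffatt in
"Evaluations of topological Tutte polynomials".

An embedded graph is encoded by its set of edges `E`, a number of isolated
vertices, and a fixed-point-free involution `t1` on the set of flags
`E × Bool × Bool` (each edge carries four flags; the fixed involutions
`t0 : (e,a,b) ↦ (e,!a,b)` and `t2 : (e,a,b) ↦ (e,a,!b)` cross the edge,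
resp. move to the other side of the edge, while `t1` encodes the rotation
structure at the vertices).  Vertices are the orbits of `⟨t1,t2⟩`, faces the
orbits of `⟨t0,t1⟩`, and connected components the orbits of `⟨t0,t1,t2⟩`.
-/

open scoped Classical

noncomputable section

/-- A ribbon graph (equivalently, a cellularly embedded graph) in the flag model. -/
structure RibbonGraph where
  E : Type
  fintypeE : Fintype E
  decE : DecidableEq E
  isolated : ℕ
  t1 : E × Bool × Bool → E × Bool × Bool
  inv1 : Function.Involutive t1
  fix1 : ∀ x, t1 x ≠ x

attribute [instance] RibbonGraph.fintypeE RibbonGraph.decE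

/-- The number of orbits of the group generated by a family of moves encoded by the
relation `r`, computed as the number of connected components of the associated graph. -/
def orbCount {α : Type} (r : α → α → Prop) : ℕ :=
  Nat.card (SimpleGraph.fromRel r).ConnectedComponent

namespace RibbonGraph

variable (G : RibbonGraph)

/-- The flags of an embedded graph: four per edge. -/
abbrev Flag : Type := G.E × Bool × Bool

/-- The involution crossing an edge. -/
def t0 : G.Flag → G.Flag := fun x => (x.1, !x.2.1, x.2.2)

/-- The involution moving to the other side of an edge. -/
def t2 : G.Flag → G.Flag := fun x => (x.1, x.2.1, !x.2.2)

lemma t0_invol : Function.Involutive G.t0 := by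
  intro x; simp [t0]

lemma t2_invol : Function.Involutive G.t2 := by
  intro x; simp [t2]

/-- Two flags are in the same vertex iff they are connected in this graph. -/
def vertexGraph : SimpleGraph G.Flag :=
  SimpleGraph.fromRel fun x y => G.t1 x = y ∨ G.t2 x = y

/-- The number of vertices. -/
def vCount : ℕ :=
  orbCount (fun x y : G.Flag => G.t1 x = y ∨ G.t2 x = y) + G.isolated

/-- The number of edges. -/
def eCount : ℕ := Fintype.card G.E

/-- The number of connected components of the spanning subgraph `(V, A)`. -/
def cSub (A : Finset G.E) : ℕ :=
  orbCount (fun x y : G.Flag => G.t1 x = y ∨ G.t2 x = y ∨ (x.1 ∈ A ∧ G.t0 x = y)) + G.isolated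

/-- The number of connected components. -/
def cCount : ℕ := G.cSub Finset.univ

/-- The number of boundary components (faces) of the spanning ribbon subgraph `(V, A)`. -/
def fSub (A : Finset G.E) : ℕ :=
  orbCount (fun x y : G.Flag => G.t1 x = y ∨ (if x.1 ∈ A then G.t0 x else G.t2 x) = y) +
    G.isolated

/-- The number of faces (boundary components of the ribbon graph). -/
def fCount : ℕ := G.fSub Finset.univ

/-- The rank `r(G) = v(G) - c(G)`. -/
def rank : ℕ := G.vCount - G.cCount

/-- The rank `r(A)` of the spanning subgraph `(V, A)`. -/
def rankSub (A : Finset G.E) : ℕ := G.vCount - G.cSub A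

/-- The nullity `n(A) = |A| - r(A)` of the spanning subgraph `(V, A)`. -/
def nullSub (A : Finset G.E) : ℕ := A.card + G.cSub A - G.vCount

/-- The nullity `n(G) = e(G) - r(G)`. -/
def nullity : ℕ := G.nullSub Finset.univ

/-- The Euler genus `γ(A) = c(A) - f(A) + n(A)` of the spanning ribbon subgraph `(V, A)`. -/
def genusSub (A : Finset G.E) : ℕ := 2 * G.cSub A + A.card - (G.vCount + G.fSub A)

/-! ### Partial Petrials and partial duals -/

/-- The flag involution realising a half-twist on the edges in `A`. -/
def twist (A : Finset G.E) : G.Flag → G.Flag :=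
  fun x => if x.1 ∈ A then (x.1, xor x.2.1 x.2.2, x.2.2) else x

lemma twist_twist (A : Finset G.E) (x : G.Flag) : G.twist A (G.twist A x) = x := by
  by_cases h : x.1 ∈ A <;> simp [twist, h, Bool.xor_assoc]

/-- The partial Petrial `G^{τ(A)}`: give a half-twist to every edge in `A`. -/
def petrial (A : Finset G.E) : RibbonGraph where
  E := G.E
  fintypeE := G.fintypeE
  decE := G.decE
  isolated := G.isolated
  t1 := fun x => G.twist A (G.t1 (G.twist A x))
  inv1 := by
    intro x
    show G.twist A (G.t1 (G.twist A (G.twist A (G.t1 (G.twist A x))))) = x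
    rw [G.twist_twist, G.inv1 (G.twist A x), G.twist_twist]
  fix1 := by
    intro x h
    have h2 := congrArg (G.twist A) h
    rw [G.twist_twist] at h2
    exact G.fix1 _ h2

/-- The flag involution realising partial duality on the edges in `A`. -/
def swapS (A : Finset G.E) : G.Flag → G.Flag :=
  fun x => if x.1 ∈ A then (x.1, x.2.2, x.2.1) else x

lemma swapS_swapS (A : Finset G.E) (x : G.Flag) : G.swapS A (G.swapS A x) = x := by
  by_cases h : x.1 ∈ A <;> simp [swapS, h]

/-- Chmutov's partial dual `G^{δ(A)}` of `G` with respect to `A ⊆ E(G)`. -/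
def pdual (A : Finset G.E) : RibbonGraph where
  E := G.E
  fintypeE := G.fintypeE
  decE := G.decE
  isolated := G.isolated
  t1 := fun x => G.swapS A (G.t1 (G.swapS A x))
  inv1 := by
    intro x
    show G.swapS A (G.t1 (G.swapS A (G.swapS A (G.t1 (G.swapS A x))))) = x
    rw [G.swapS_swapS, G.inv1 (G.swapS A x), G.swapS_swapS]
  fix1 := by
    intro x h
    have h2 := congrArg (G.swapS A) h
    rw [G.swapS_swapS] at h2
    exact G.fix1 _ h2

/-- The geometric dual `G*`. -/
def dual : RibbonGraph := G.pdual Finset.univ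

/-- The Petrie dual `G^×`. -/
def petrialAll : RibbonGraph := G.petrial Finset.univ

/-! ### Graph polynomials -/

/-- The Bollobás–Riordan ribbon graph polynomial
`R(G;x,y,z) = Σ_{A⊆E} (x-1)^{r(G)-r(A)} y^{n(A)} z^{c(A)-f(A)+n(A)}`. -/
def BR {R : Type} [CommRing R] (x y z : R) : R :=
  ∑ A : Finset G.E,
    (x - 1) ^ (G.rank - G.rankSub A) * y ^ G.nullSub A * z ^ G.genusSub A

/-- The Tutte polynomial `T(G;x,y) = Σ_{A⊆E} (x-1)^{r(G)-r(A)} (y-1)^{n(A)}`. -/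
def tutte {R : Type} [CommRing R] (x y : R) : R :=
  ∑ A : Finset G.E, (x - 1) ^ (G.rank - G.rankSub A) * (y - 1) ^ G.nullSub A

/-- The chromatic polynomial of the underlying abstract graph of `G`, via Whitney's
rank expansion `χ(G;λ) = Σ_{A⊆E} (-1)^{|A|} λ^{c(A)}`. -/
def chromatic {R : Type} [CommRing R] (l : R) : R :=
  ∑ A : Finset G.E, (-1 : R) ^ A.card * l ^ G.cSub A

/-- The Penrose polynomial `P(G;λ) = Σ_{A⊆E} (-1)^{|A|} λ^{f(G^{τ(A)})}`. -/
def penrose {R : Type} [CommRing R] (l : R) : R :=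
  ∑ A : Finset G.E, (-1 : R) ^ A.card * l ^ (G.petrial A).fCount

/-- The topological transition polynomial `Q(G;(a,b,c),t)`, as the state sum over the
states of the medial graph `G_m`:  a state chooses at each vertex `v_e` of `G_m` a white
smoothing (`e ∈ A`), a black smoothing (`e ∈ B`) or a crossing (`e ∈ C`), and its number
of closed curves is the number of boundary components of the spanning ribbon subgraph of
`G^{τ(C)}` on the edge set `A ∪ C`. -/
def transition {R : Type} [CommRing R] (a b c t : R) : R :=
  ∑ C : Finset G.E, ∑ A ∈ (Finset.univ \ C).powerset,
    a ^ A.card * b ^ (G.eCount - A.card - C.card) * c ^ C.card *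
      t ^ ((G.petrial C).fSub (A ∪ C))

/-! ### Topological predicates -/

/-- `G` is orientable iff its flags admit a consistent 2-colouring
(the graph-encoded map is bipartite). -/
def Orientable : Prop :=
  ∃ o : G.Flag → Bool,
    (∀ x, o (G.t0 x) = !o x) ∧ (∀ x, o (G.t1 x) = !o x) ∧ (∀ x, o (G.t2 x) = !o x)

/-- `G` is checkerboard colourable iff its faces can be properly 2-coloured. -/
def CheckerboardColourable : Prop :=
  ∃ c : G.Flag → Bool,
    (∀ x, c (G.t0 x) = c x) ∧ (∀ x, c (G.t1 x) = c x) ∧ (∀ x, c (G.t2 x) = !c x)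

/-- `G` is a plane graph: connected with Euler genus `0`. -/
def IsPlane : Prop :=
  G.cCount = 1 ∧ (G.vCount : ℤ) - (G.eCount : ℤ) + (G.fCount : ℤ) = 2

/-- `G` has no loops: no edge has both of its ends on the same vertex. -/
def Loopless : Prop := ∀ x : G.Flag, ¬ G.vertexGraph.Reachable x (G.t0 x)

/-- `G` contains a loop. -/
def HasLoop : Prop := ∃ x : G.Flag, G.vertexGraph.Reachable x (G.t0 x)

/-- The edge `e` of `G` is not a loop. -/
def NonLoop (e : G.E) : Prop :=
  ¬ G.vertexGraph.Reachable (e, true, true) (e, false, true)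

/-- The underlying abstract graph of `G` admits a proper vertex 4-colouring. -/
def FourColourable : Prop :=
  ∃ c : G.Flag → Fin 4,
    (∀ x, c (G.t1 x) = c x) ∧ (∀ x, c (G.t2 x) = c x) ∧ (∀ x, c (G.t0 x) ≠ c x)

/-- `G` is cubic: every vertex has degree `3`, i.e. carries six flags. -/
def Cubic : Prop :=
  G.isolated = 0 ∧
    ∀ C : G.vertexGraph.ConnectedComponent,
      Nat.card {x : G.Flag // G.vertexGraph.connectedComponentMk x = C} = 6

/-- The number of proper edge 3-colourings of `G`: edges sharing a vertex receive
distinct colours. -/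
def EdgeColourings3 : ℕ :=
  Nat.card {c : G.E → Fin 3 //
    ∀ x y : G.Flag, G.vertexGraph.Reachable x y → x.1 ≠ y.1 → c x.1 ≠ c y.1}

/-! ### `k`-valuations of the medial graph

The edges of the medial graph `G_m` correspond to the corners `{x, t1 x}` of `G`,
together with one free loop for each isolated vertex of `G`.  The four medial edges
incident with the medial vertex `v_e` correspond to the four flags of `e`. -/

section Valuations

variable {k : ℕ}

/-- The colours around `v_e` are paired across the white faces. -/
def WhiteAt (c : G.Flag → Fin k) (e : G.E) : Prop :=
  c (e, true, true) = c (e, false, true) ∧ c (e, true, false) = c (e, false, false)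

/-- The colours around `v_e` are paired across the black faces. -/
def BlackAt (c : G.Flag → Fin k) (e : G.E) : Prop :=
  c (e, true, true) = c (e, true, false) ∧ c (e, false, true) = c (e, false, false)

/-- The colours around `v_e` are paired crosswise. -/
def CrossAt (c : G.Flag → Fin k) (e : G.E) : Prop :=
  c (e, true, true) = c (e, false, false) ∧ c (e, true, false) = c (e, false, true)

/-- All four colours around `v_e` agree. -/
def TotalAt (c : G.Flag → Fin k) (e : G.E) : Prop :=
  c (e, true, true) = c (e, false, true) ∧ c (e, true, true) = c (e, true, false) ∧
    c (e, true, true) = c (e, false, false)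

/-- A `k`-valuation of the medial graph `G_m`: an edge `k`-colouring of `G_m` such that
every vertex of `G_m` is incident with an even number of edges of each colour. -/
def IsValuation (c : G.Flag → Fin k) : Prop :=
  (∀ x, c (G.t1 x) = c x) ∧
    ∀ e : G.E, G.WhiteAt c e ∨ G.BlackAt c e ∨ G.CrossAt c e

/-- The number of vertices of `G_m` of total type in a valuation. -/
def totalCount (c : G.Flag → Fin k) : ℕ :=
  (Finset.univ.filter fun e : G.E => G.TotalAt c e).card

/-- The number of vertices of `G_m` of white type in a valuation. -/
def whiteCount (c : G.Flag → Fin k) : ℕ :=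
  (Finset.univ.filter fun e : G.E => G.WhiteAt c e ∧ ¬ G.TotalAt c e).card

/-- The number of vertices of `G_m` of black type in a valuation. -/
def blackCount (c : G.Flag → Fin k) : ℕ :=
  (Finset.univ.filter fun e : G.E => G.BlackAt c e ∧ ¬ G.TotalAt c e).card

/-- The number of vertices of `G_m` of crossing type in a valuation. -/
def crossCount (c : G.Flag → Fin k) : ℕ :=
  (Finset.univ.filter fun e : G.E => G.CrossAt c e ∧ ¬ G.TotalAt c e).card

/-- The set `K(G_m,k)` of all `k`-valuations of `G_m` (a valuation also colours the
free loop of `G_m` arising from each isolated vertex of `G`). -/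
def kvals (k : ℕ) : Finset ((G.Flag → Fin k) × (Fin G.isolated → Fin k)) :=
  Finset.univ.filter fun φ => G.IsValuation φ.1

/-- The set `R(G_m,k)` of `R`-permissible `k`-valuations: every vertex of `G_m` is of
white, black or total type. -/
def kvalsR (k : ℕ) : Finset ((G.Flag → Fin k) × (Fin G.isolated → Fin k)) :=
  Finset.univ.filter fun φ =>
    G.IsValuation φ.1 ∧ ∀ e : G.E, ¬ (G.CrossAt φ.1 e ∧ ¬ G.TotalAt φ.1 e)

/-- The set `P(G_m,k)` of `P`-permissible `k`-valuations: every vertex of `G_m` is of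
white, crossing or total type. -/
def kvalsP (k : ℕ) : Finset ((G.Flag → Fin k) × (Fin G.isolated → Fin k)) :=
  Finset.univ.filter fun φ =>
    G.IsValuation φ.1 ∧ ∀ e : G.E, ¬ (G.BlackAt φ.1 e ∧ ¬ G.TotalAt φ.1 e)

/-- The set `A(G_m,k)` of admissible `k`-valuations: every vertex of `G_m` is of
white or crossing type. -/
def kvalsA (k : ℕ) : Finset ((G.Flag → Fin k) × (Fin G.isolated → Fin k)) :=
  Finset.univ.filter fun φ =>
    G.IsValuation φ.1 ∧
      ∀ e : G.E, ¬ G.TotalAt φ.1 e ∧ (G.WhiteAt φ.1 e ∨ G.CrossAt φ.1 e)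

end Valuations

/-! ### Doubling all edges -/

/-- The flag involution of the doubled graph `D(G)`. -/
def dblT1 : (G.E × Bool) × Bool × Bool → (G.E × Bool) × Bool × Bool := fun x =>
  if x.1.2 = x.2.2 then
    (((G.t1 (x.1.1, x.2)).1, (G.t1 (x.1.1, x.2)).2.2), (G.t1 (x.1.1, x.2)).2)
  else ((x.1.1, x.2.2), x.2.1, x.1.2)

lemma dblT1_invol : Function.Involutive G.dblT1 := by
  rintro ⟨⟨e, i⟩, a, b⟩
  by_cases h : i = b
  · subst h
    simp [dblT1, G.inv1 (e, a, i)]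
  · simp [dblT1, h, Ne.symm h]

lemma dblT1_fix (x) : G.dblT1 x ≠ x := by
  rintro hcon
  obtain ⟨⟨e, i⟩, a, b⟩ := x
  by_cases h : i = b
  · subst h
    simp only [dblT1, if_pos rfl] at hcon
    have h1 : (G.t1 (e, a, i)).1 = e := congrArg (fun z => z.1.1) hcon
    have h2 : (G.t1 (e, a, i)).2 = (a, i) := congrArg (fun z => z.2) hcon
    exact G.fix1 (e, a, i) (Prod.ext h1 h2)
  · simp only [dblT1, if_neg h] at hcon
    have h1 : b = i := congrArg (fun z => z.1.2) hcon
    exact h h1.symm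

/-- The embedded graph `D(G)` obtained from `G` by doubling every edge: for each edge a
parallel copy is embedded so that the two copies bound a bigon face. -/
def double : RibbonGraph where
  E := G.E × Bool
  fintypeE := inferInstance
  decE := inferInstance
  isolated := G.isolated
  t1 := G.dblT1
  inv1 := G.dblT1_invol
  fix1 := G.dblT1_fix

end RibbonGraph


namespace KPAux

variable {α : Type}



variable {α : Type}

lemma reach_mono {G₁ G₂ : SimpleGraph α} (h : ∀ x y, G₁.Adj x y → G₂.Reachable x y) :
    ∀ {x y : α}, G₁.Reachable x y → G₂.Reachable x y := by
  intro x y hr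
  obtain ⟨w⟩ := hr
  induction w with
  | nil => exact SimpleGraph.Reachable.refl _
  | cons hadj _ ih => exact (h _ _ hadj).trans ih

/-- Map on connected components induced by reachability-monotonicity. -/
def cmap (G₁ G₂ : SimpleGraph α) (h : ∀ x y, G₁.Adj x y → G₂.Reachable x y) :
    G₁.ConnectedComponent → G₂.ConnectedComponent :=
  SimpleGraph.ConnectedComponent.lift G₂.connectedComponentMk
    (fun _ _ p _ => SimpleGraph.ConnectedComponent.sound (reach_mono h ⟨p⟩))

lemma cmap_mk {G₁ G₂ : SimpleGraph α} (h : ∀ x y, G₁.Adj x y → G₂.Reachable x y) (v : α) :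
    cmap G₁ G₂ h (G₁.connectedComponentMk v) = G₂.connectedComponentMk v := rfl

lemma cmap_surj (G₁ G₂ : SimpleGraph α) (h : ∀ x y, G₁.Adj x y → G₂.Reachable x y) :
    Function.Surjective (cmap G₁ G₂ h) := by
  intro c
  obtain ⟨v, rfl⟩ := c.exists_rep
  exact ⟨G₁.connectedComponentMk v, rfl⟩

lemma card_comp_le [Finite α] (G₁ G₂ : SimpleGraph α)
    (h : ∀ x y, G₁.Adj x y → G₂.Reachable x y) :
    Nat.card G₂.ConnectedComponent ≤ Nat.card G₁.ConnectedComponent :=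
  Nat.card_le_card_of_surjective _ (cmap_surj G₁ G₂ h)

lemma card_comp_eq [Finite α] (G₁ G₂ : SimpleGraph α)
    (h : ∀ x y, G₁.Adj x y → G₂.Reachable x y)
    (h' : ∀ x y, G₂.Adj x y → G₁.Reachable x y) :
    Nat.card G₁.ConnectedComponent = Nat.card G₂.ConnectedComponent :=
  le_antisymm (card_comp_le G₂ G₁ h') (card_comp_le G₁ G₂ h)

/-- Adding one genuinely-merging edge decreases the component count. -/
lemma card_comp_add_edge [Finite α] {G₁ G₂ : SimpleGraph α} {u v : α}
    (h : ∀ x y, G₁.Adj x y → G₂.Reachable x y) (huv2 : G₂.Reachable u v)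
    (huv1 : ¬ G₁.Reachable u v) :
    Nat.card G₂.ConnectedComponent + 1 ≤ Nat.card G₁.ConnectedComponent := by
  classical
  have : Fintype α := Fintype.ofFinite α
  have h1 : Fintype G₁.ConnectedComponent := Fintype.ofFinite _
  have h2 : Fintype G₂.ConnectedComponent := Fintype.ofFinite _
  rw [Nat.card_eq_fintype_card, Nat.card_eq_fintype_card]
  set m := cmap G₁ G₂ h with hm
  set s : Finset G₁.ConnectedComponent := Finset.univ.erase (G₁.connectedComponentMk v) with hs
  have himg : Finset.univ ⊆ s.image m := by
    intro c _
    obtain ⟨y, rfl⟩ := c.exists_rep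
    by_cases hy : G₁.connectedComponentMk y = G₁.connectedComponentMk v
    · refine Finset.mem_image.2 ⟨G₁.connectedComponentMk u, ?_, ?_⟩
      · refine Finset.mem_erase.2 ⟨?_, Finset.mem_univ _⟩
        intro hc
        exact huv1 (SimpleGraph.ConnectedComponent.exact hc)
      · exact SimpleGraph.ConnectedComponent.sound
          (huv2.trans (reach_mono h (SimpleGraph.ConnectedComponent.exact hy)).symm)
    · exact Finset.mem_image.2 ⟨G₁.connectedComponentMk y, Finset.mem_erase.2 ⟨hy, Finset.mem_univ _⟩, rfl⟩
  have hcard2 : Fintype.card G₂.ConnectedComponent ≤ s.card := by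
    calc Fintype.card G₂.ConnectedComponent = (Finset.univ : Finset G₂.ConnectedComponent).card := by
          rw [Finset.card_univ]
      _ ≤ (s.image m).card := Finset.card_le_card himg
      _ ≤ s.card := Finset.card_image_le
  have hscard : s.card = Fintype.card G₁.ConnectedComponent - 1 := by
    rw [hs, Finset.card_erase_of_mem (Finset.mem_univ _), Finset.card_univ]
  have hpos : 1 ≤ Fintype.card G₁.ConnectedComponent := by
    have : Nonempty G₁.ConnectedComponent := ⟨G₁.connectedComponentMk v⟩
    exact Fintype.card_pos
  omega



/-- Reachability in a graph obtained by adding one edge `uv` to `G₁`. -/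
def Rel3 (G₁ : SimpleGraph α) (u v x y : α) : Prop :=
  G₁.Reachable x y ∨ (G₁.Reachable x u ∧ G₁.Reachable v y) ∨
    (G₁.Reachable x v ∧ G₁.Reachable u y)

lemma Rel3.refl (G₁ : SimpleGraph α) (u v x : α) : Rel3 G₁ u v x x :=
  Or.inl (SimpleGraph.Reachable.refl x)

lemma Rel3.symm {G₁ : SimpleGraph α} {u v x y : α} (h : Rel3 G₁ u v x y) : Rel3 G₁ u v y x := by
  rcases h with h | ⟨h1, h2⟩ | ⟨h1, h2⟩
  · exact Or.inl h.symm
  · exact Or.inr (Or.inr ⟨h2.symm, h1.symm⟩)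
  · exact Or.inr (Or.inl ⟨h2.symm, h1.symm⟩)

lemma Rel3.trans {G₁ : SimpleGraph α} {u v x z y : α} (h1 : Rel3 G₁ u v x z)
    (h2 : Rel3 G₁ u v z y) : Rel3 G₁ u v x y := by
  rcases h1 with r | ⟨xu, vz⟩ | ⟨xv, uz⟩ <;> rcases h2 with r' | ⟨a, b⟩ | ⟨a, b⟩
  · exact Or.inl (r.trans r')
  · exact Or.inr (Or.inl ⟨r.trans a, b⟩)
  · exact Or.inr (Or.inr ⟨r.trans a, b⟩)
  · exact Or.inr (Or.inl ⟨xu, vz.trans r'⟩)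
  · exact Or.inl ((xu.trans ((vz.trans a).symm)).trans b)
  · exact Or.inl (xu.trans b)
  · exact Or.inr (Or.inr ⟨xv, uz.trans r'⟩)
  · exact Or.inl (xv.trans b)
  · exact Or.inl ((xv.trans ((uz.trans a).symm)).trans b)

lemma rel3_of_reach {G₁ G₂ : SimpleGraph α} {u v : α}
    (h21 : ∀ x y, G₂.Adj x y → Rel3 G₁ u v x y) {x y : α} (h : G₂.Reachable x y) :
    Rel3 G₁ u v x y := by
  obtain ⟨w⟩ := h
  induction w with
  | nil => exact Rel3.refl _ _ _ _
  | cons hadj _ ih => exact (h21 _ _ hadj).trans ih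

lemma card_comp_le_add_one [Finite α] {G₁ G₂ : SimpleGraph α} {u v : α}
    (h12 : ∀ x y, G₁.Adj x y → G₂.Reachable x y)
    (h21 : ∀ x y, G₂.Adj x y → Rel3 G₁ u v x y) :
    Nat.card G₁.ConnectedComponent ≤ Nat.card G₂.ConnectedComponent + 1 := by
  classical
  have : Fintype α := Fintype.ofFinite α
  have h1 : Fintype G₁.ConnectedComponent := Fintype.ofFinite _
  have h2 : Fintype G₂.ConnectedComponent := Fintype.ofFinite _
  rw [Nat.card_eq_fintype_card, Nat.card_eq_fintype_card]
  set m := cmap G₁ G₂ h12 with hm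
  set s : Finset G₁.ConnectedComponent := Finset.univ.erase (G₁.connectedComponentMk v) with hs
  have hinj : Set.InjOn m s := by
    intro a ha b hb hab
    obtain ⟨x, rfl⟩ := a.exists_rep
    obtain ⟨y, rfl⟩ := b.exists_rep
    have hx : (G₁.connectedComponentMk x) ≠ G₁.connectedComponentMk v :=
      (Finset.mem_erase.1 ha).1
    have hy : (G₁.connectedComponentMk y) ≠ G₁.connectedComponentMk v :=
      (Finset.mem_erase.1 hb).1
    have hrel : Rel3 G₁ u v x y :=
      rel3_of_reach h21 (SimpleGraph.ConnectedComponent.exact hab)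
    rcases hrel with r | ⟨_, h2'⟩ | ⟨h1', _⟩
    · exact SimpleGraph.ConnectedComponent.sound r
    · exact absurd (SimpleGraph.ConnectedComponent.sound h2').symm hy
    · exact absurd (SimpleGraph.ConnectedComponent.sound h1') hx
  have hle : s.card ≤ Fintype.card G₂.ConnectedComponent := by
    calc s.card ≤ (Finset.univ : Finset G₂.ConnectedComponent).card :=
          Finset.card_le_card_of_injOn m (fun a _ => Finset.mem_univ _) hinj
      _ = _ := Finset.card_univ
  have hscard : s.card = Fintype.card G₁.ConnectedComponent - 1 := by
    rw [hs, Finset.card_erase_of_mem (Finset.mem_univ _), Finset.card_univ]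
  have hpos : 1 ≤ Fintype.card G₁.ConnectedComponent := by
    have : Nonempty G₁.ConnectedComponent := ⟨G₁.connectedComponentMk v⟩
    exact Fintype.card_pos
  omega

lemma even_card_invol {β : Type} [DecidableEq β] (f : β → β) :
    ∀ (n : ℕ) (s : Finset β), s.card = n → (∀ x ∈ s, f x ∈ s) →
      (∀ x ∈ s, f (f x) = x) → (∀ x ∈ s, f x ≠ x) → Even n := by
  intro n
  induction n using Nat.strong_induction_on with
  | _ n ih =>
    intro s hcard hcl hinv hne
    rcases s.eq_empty_or_nonempty with rfl | ⟨a, ha⟩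
    · simp only [Finset.card_empty] at hcard
      exact hcard ▸ Even.zero
    · have hfa : f a ∈ s := hcl a ha
      have hne' : f a ≠ a := hne a ha
      set t := (s.erase a).erase (f a) with ht
      have hfa' : f a ∈ s.erase a := Finset.mem_erase.2 ⟨hne', hfa⟩
      have htcard : t.card = n - 2 := by
        rw [ht, Finset.card_erase_of_mem hfa', Finset.card_erase_of_mem ha, hcard]
        omega
      have hmem : ∀ x ∈ t, x ∈ s := fun x hx =>
        Finset.mem_of_mem_erase (Finset.mem_of_mem_erase hx)
      have hcl' : ∀ x ∈ t, f x ∈ t := by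
        intro x hx
        have hxs := hmem x hx
        have hx1 : x ≠ f a := (Finset.mem_erase.1 hx).1
        have hx2 : x ≠ a := (Finset.mem_erase.1 (Finset.mem_of_mem_erase hx)).1
        refine Finset.mem_erase.2 ⟨?_, Finset.mem_erase.2 ⟨?_, hcl x hxs⟩⟩
        · intro hc; apply hx2; rw [← hinv x hxs, hc, hinv a ha]
        · intro hc; apply hx1; rw [← hinv x hxs, hc]
      have h2n : 2 ≤ n := by
        have : 1 < s.card := Finset.one_lt_card.2 ⟨a, ha, f a, hfa, Ne.symm hne'⟩
        omega
      have heven := ih (n - 2) (by omega) t htcard hcl'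
        (fun x hx => hinv x (hmem x hx)) (fun x hx => hne x (hmem x hx))
      obtain ⟨r, hr⟩ := heven
      exact ⟨r + 1, by omega⟩

lemma const_of_reach {Γ : SimpleGraph α} {β : Type*} {c : α → β}
    (hc : ∀ x y, Γ.Adj x y → c x = c y) {x y : α} (h : Γ.Reachable x y) : c x = c y := by
  obtain ⟨w⟩ := h
  induction w with
  | nil => rfl
  | cons hadj _ ih => exact (hc _ _ hadj).trans ih

/-- Colourings respecting a graph's adjacency are colourings of its components. -/
def compEquiv (Γ : SimpleGraph α) (k : ℕ) :
    {c : α → Fin k // ∀ x y, Γ.Adj x y → c x = c y} ≃ (Γ.ConnectedComponent → Fin k) where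
  toFun c := SimpleGraph.ConnectedComponent.lift c.1
    (fun _ _ p _ => const_of_reach c.2 ⟨p⟩)
  invFun g := ⟨fun a => g (Γ.connectedComponentMk a), fun x y hadj =>
    congrArg g (SimpleGraph.ConnectedComponent.sound hadj.reachable)⟩
  left_inv c := Subtype.ext (funext fun a => rfl)
  right_inv g := funext fun cc => by
    obtain ⟨v, rfl⟩ := cc.exists_rep
    rfl

lemma card_respects [Finite α] (Γ : SimpleGraph α) (k : ℕ) :
    Nat.card {c : α → Fin k // ∀ x y, Γ.Adj x y → c x = c y} =
      k ^ Nat.card Γ.ConnectedComponent := by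
  rw [Nat.card_congr (compEquiv Γ k), Nat.card_fun]
  simp



lemma fromRel_reach {r : α → α → Prop} {x y : α} (hne : x ≠ y) (h : r x y) :
    (SimpleGraph.fromRel r).Reachable x y :=
  ((SimpleGraph.fromRel_adj r x y).2 ⟨hne, Or.inl h⟩).reachable

lemma adj_mono_reach {r r' : α → α → Prop} (h : ∀ x y, r x y → r' x y) :
    ∀ x y, (SimpleGraph.fromRel r).Adj x y → (SimpleGraph.fromRel r').Reachable x y := by
  intro x y hxy
  rw [SimpleGraph.fromRel_adj] at hxy
  exact ((SimpleGraph.fromRel_adj r' x y).2 ⟨hxy.1, hxy.2.imp (h _ _) (h _ _)⟩).reachable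

lemma orbCount_le_of_reach [Finite α] {r r' : α → α → Prop}
    (h : ∀ x y, x ≠ y → r x y → (SimpleGraph.fromRel r').Reachable x y) :
    orbCount r' ≤ orbCount r := by
  unfold orbCount
  apply card_comp_le
  intro x y hxy
  rw [SimpleGraph.fromRel_adj] at hxy
  rcases hxy.2 with h1 | h1
  · exact h x y hxy.1 h1
  · exact (h y x (Ne.symm hxy.1) h1).symm

lemma orbCount_congr [Finite α] {r r' : α → α → Prop} (h : ∀ x y, r x y ↔ r' x y) :
    orbCount r = orbCount r' :=
  le_antisymm
    (orbCount_le_of_reach fun x y hne hr => fromRel_reach hne ((h x y).2 hr))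
    (orbCount_le_of_reach fun x y hne hr => fromRel_reach hne ((h x y).1 hr))

lemma rel3_of_rel {G₁ : SimpleGraph α} {u v : α} {r : α → α → Prop}
    (h : ∀ x y, x ≠ y → r x y → Rel3 G₁ u v x y) :
    ∀ x y, (SimpleGraph.fromRel r).Adj x y → Rel3 G₁ u v x y := by
  intro x y hadj
  rw [SimpleGraph.fromRel_adj] at hadj
  rcases hadj.2 with h1 | h1
  · exact h x y hadj.1 h1
  · exact (h y x (Ne.symm hadj.1) h1).symm


end KPAux


namespace RibbonGraph

variable (G : RibbonGraph)

lemma t0_ne (x : G.Flag) : G.t0 x ≠ x := by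
  rcases x with ⟨e, a, b⟩; simp [t0]

lemma t2_ne (x : G.Flag) : G.t2 x ≠ x := by
  rcases x with ⟨e, a, b⟩; simp [t2]

/-- The relation generating the vertices. -/
def vrel : G.Flag → G.Flag → Prop := fun x y => G.t1 x = y ∨ G.t2 x = y

/-- The relation generating the components of the spanning subgraph on `A`. -/
def crel (A : Finset G.E) : G.Flag → G.Flag → Prop :=
  fun x y => G.t1 x = y ∨ G.t2 x = y ∨ (x.1 ∈ A ∧ G.t0 x = y)

/-- The relation generating the faces of the spanning subgraph on `A`. -/
def frel (A : Finset G.E) : G.Flag → G.Flag → Prop :=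
  fun x y => G.t1 x = y ∨ (if x.1 ∈ A then G.t0 x else G.t2 x) = y

/-- The face relation with the edge `e` cut open. -/
def hrel (A : Finset G.E) (e : G.E) : G.Flag → G.Flag → Prop :=
  fun x y => G.t1 x = y ∨ (x.1 ≠ e ∧ (if x.1 ∈ A then G.t0 x else G.t2 x) = y)

/-- The cut-open face relation plus a single edge joining two flags of `e`. -/
def jrel (A : Finset G.E) (e : G.E) : G.Flag → G.Flag → Prop :=
  fun x y => G.hrel A e x y ∨ (x = (e, true, true) ∧ y = (e, false, true))

/-- The face relation with all four medial edges at `e` present. -/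
def krel (A : Finset G.E) (e : G.E) : G.Flag → G.Flag → Prop :=
  fun x y => G.t1 x = y ∨ (if x.1 ∈ A then G.t0 x else G.t2 x) = y ∨
    (x.1 = e ∧ (G.t0 x = y ∨ G.t2 x = y))

lemma vCount_eq : G.vCount = orbCount G.vrel + G.isolated := rfl

lemma cSub_eq (A : Finset G.E) : G.cSub A = orbCount (G.crel A) + G.isolated := rfl

lemma fSub_eq (A : Finset G.E) : G.fSub A = orbCount (G.frel A) + G.isolated := rfl

variable {G}

/-- One step of reachability coming from `t1`. -/
lemma reach_t1 {r : G.Flag → G.Flag → Prop} (hr : ∀ x, r x (G.t1 x)) (x : G.Flag) :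
    (SimpleGraph.fromRel r).Reachable x (G.t1 x) :=
  KPAux.fromRel_reach (Ne.symm (G.fix1 x)) (hr x)

lemma crel_t2_reach (A : Finset G.E) (x : G.Flag) :
    (SimpleGraph.fromRel (G.crel A)).Reachable x (G.t2 x) :=
  KPAux.fromRel_reach (Ne.symm (G.t2_ne x)) (Or.inr (Or.inl rfl))

lemma crel_mono {A B : Finset G.E} (hAB : A ⊆ B) :
    ∀ x y : G.Flag, G.crel A x y → G.crel B x y := by
  intro x y h
  rcases h with h | h | ⟨hm, h⟩
  · exact Or.inl h
  · exact Or.inr (Or.inl h)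
  · exact Or.inr (Or.inr ⟨hAB hm, h⟩)

lemma orb_crel_le_insert (A : Finset G.E) (e : G.E) :
    orbCount (G.crel A) ≤ orbCount (G.crel (insert e A)) + 1 := by
  have h := KPAux.card_comp_le_add_one
    (G₁ := SimpleGraph.fromRel (G.crel A))
    (G₂ := SimpleGraph.fromRel (G.crel (insert e A)))
    (u := ((e, true, true) : G.Flag)) (v := ((e, false, true) : G.Flag))
    (KPAux.adj_mono_reach (crel_mono (Finset.subset_insert e A)))
    (KPAux.rel3_of_rel ?_)
  · exact h
  intro x y hne hxy
  rcases hxy with h | h | ⟨hm, h⟩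
  · exact Or.inl (KPAux.fromRel_reach hne (Or.inl h))
  · exact Or.inl (KPAux.fromRel_reach hne (Or.inr (Or.inl h)))
  · rcases Finset.mem_insert.1 hm with he | hmA
    · obtain ⟨e', a, b⟩ := x
      obtain rfl : e' = e := he
      subst h
      cases a <;> cases b
      · -- x = (e',false,false), y = (e',true,false)
        exact Or.inr (Or.inr ⟨crel_t2_reach A ((e', false, false) : G.Flag),
          crel_t2_reach A ((e', true, true) : G.Flag)⟩)
      · -- x = (e',false,true) = v, y = (e',true,true) = u
        exact Or.inr (Or.inr ⟨SimpleGraph.Reachable.refl _, SimpleGraph.Reachable.refl _⟩)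
      · -- x = (e',true,false), y = (e',false,false)
        exact Or.inr (Or.inl ⟨crel_t2_reach A ((e', true, false) : G.Flag),
          crel_t2_reach A ((e', false, true) : G.Flag)⟩)
      · -- x = (e',true,true) = u, y = (e',false,true) = v
        exact Or.inr (Or.inl ⟨SimpleGraph.Reachable.refl _, SimpleGraph.Reachable.refl _⟩)
    · exact Or.inl (KPAux.fromRel_reach hne (Or.inr (Or.inr ⟨hmA, h⟩)))

lemma orb_vrel_eq_crel_empty : orbCount G.vrel = orbCount (G.crel (∅ : Finset G.E)) := by
  apply KPAux.orbCount_congr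
  intro x y
  unfold vrel crel
  simp

lemma orb_vrel_eq_frel_empty : orbCount G.vrel = orbCount (G.frel (∅ : Finset G.E)) := by
  apply KPAux.orbCount_congr
  intro x y
  unfold vrel frel
  simp

lemma orb_crel_le_vrel (A : Finset G.E) : orbCount (G.crel A) ≤ orbCount G.vrel := by
  apply KPAux.orbCount_le_of_reach
  intro x y hne h
  rcases h with h | h
  · exact KPAux.fromRel_reach hne (Or.inl h)
  · exact KPAux.fromRel_reach hne (Or.inr (Or.inl h))

lemma orb_cG_le_crel (A : Finset G.E) :
    orbCount (G.crel (Finset.univ : Finset G.E)) ≤ orbCount (G.crel A) := by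
  apply KPAux.orbCount_le_of_reach
  intro x y hne h
  exact KPAux.fromRel_reach hne (crel_mono (Finset.subset_univ A) x y h)

lemma orb_vrel_le (A : Finset G.E) :
    orbCount G.vrel ≤ A.card + orbCount (G.crel A) := by
  classical
  induction A using Finset.induction_on with
  | empty => simp [orb_vrel_eq_crel_empty]
  | @insert e A he ih =>
    calc orbCount G.vrel ≤ A.card + orbCount (G.crel A) := ih
      _ ≤ A.card + (orbCount (G.crel (insert e A)) + 1) :=
          Nat.add_le_add_left (orb_crel_le_insert A e) _
      _ = (insert e A).card + orbCount (G.crel (insert e A)) := by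
          rw [Finset.card_insert_of_notMem he]; omega

end RibbonGraph

namespace RibbonGraph

variable {G : RibbonGraph}

/-- Parity of flags of `e` in components of the cut-open face graph: if the flag
`(e,a,b)` can reach neither flag across the edge, it reaches the one on its side. -/
lemma hreach_flag (A : Finset G.E) (e : G.E) (a b : Bool)
    (h2 : ¬ (SimpleGraph.fromRel (G.hrel A e)).Reachable (e, a, b) (e, !a, b))
    (h4 : ¬ (SimpleGraph.fromRel (G.hrel A e)).Reachable (e, a, b) (e, !a, !b)) :
    (SimpleGraph.fromRel (G.hrel A e)).Reachable (e, a, b) (e, a, !b) := by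
  classical
  by_contra h3
  set Γ := SimpleGraph.fromRel (G.hrel A e) with hΓ
  set K : Finset G.Flag := Finset.univ.filter (fun y => Γ.Reachable (e, a, b) y) with hK
  have hmemK : ∀ y, y ∈ K ↔ Γ.Reachable (e, a, b) y := by intro y; simp [hK]
  have ht1K : ∀ x ∈ K, G.t1 x ∈ K := by
    intro x hx
    exact (hmemK _).2 (((hmemK _).1 hx).trans
      (KPAux.fromRel_reach (Ne.symm (G.fix1 x)) (Or.inl rfl)))
  have hKeven : Even K.card :=
    KPAux.even_card_invol G.t1 K.card K rfl ht1K (fun x _ => G.inv1 x) (fun x _ => G.fix1 x)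
  set σ : G.Flag → G.Flag := fun y =>
    if y.1 = e then y else (if y.1 ∈ A then G.t0 y else G.t2 y) with hσ
  have hσfst : ∀ y, (σ y).1 = y.1 := by
    intro y
    by_cases h : y.1 = e
    · simp [hσ, h]
    · by_cases h' : y.1 ∈ A <;> simp [hσ, h, h', t0, t2]
  have hσinv : ∀ y, σ (σ y) = y := by
    intro y
    by_cases h : y.1 = e
    · simp [hσ, h]
    · by_cases h' : y.1 ∈ A
      · have h1 : (σ y).1 = y.1 := hσfst y
        simp only [hσ, if_neg h, if_pos h']
        rw [if_neg (by rw [show (G.t0 y).1 = y.1 from rfl]; exact h),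
          if_pos (by rw [show (G.t0 y).1 = y.1 from rfl]; exact h')]
        exact G.t0_invol y
      · simp only [hσ, if_neg h, if_neg h']
        rw [if_neg (by rw [show (G.t2 y).1 = y.1 from rfl]; exact h),
          if_neg (by rw [show (G.t2 y).1 = y.1 from rfl]; exact h')]
        exact G.t2_invol y
  have hσK : ∀ x ∈ K, σ x ∈ K := by
    intro x hx
    by_cases h : x.1 = e
    · simpa [hσ, h] using hx
    · refine (hmemK _).2 (((hmemK _).1 hx).trans (KPAux.fromRel_reach ?_ (Or.inr ⟨h, ?_⟩)))
      · by_cases h' : x.1 ∈ A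
        · simp only [hσ, if_neg h, if_pos h']
          exact Ne.symm (G.t0_ne x)
        · simp only [hσ, if_neg h, if_neg h']
          exact Ne.symm (G.t2_ne x)
      · by_cases h' : x.1 ∈ A <;> simp [hσ, h, h']
  set Kf : Finset G.Flag := K.filter (fun y => y.1 = e) with hKf
  set Kn : Finset G.Flag := K.filter (fun y => ¬ y.1 = e) with hKn
  have hKneven : Even Kn.card := by
    refine KPAux.even_card_invol σ Kn.card Kn rfl ?_ ?_ ?_
    · intro x hx
      obtain ⟨hxK, hxe⟩ := Finset.mem_filter.1 hx
      refine Finset.mem_filter.2 ⟨hσK x hxK, ?_⟩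
      rw [hσfst x]; exact hxe
    · intro x hx
      exact hσinv x
    · intro x hx
      obtain ⟨hxK, hxe⟩ := Finset.mem_filter.1 hx
      by_cases h' : x.1 ∈ A
      · simp only [hσ, if_neg hxe, if_pos h']
        exact G.t0_ne x
      · simp only [hσ, if_neg hxe, if_neg h']
        exact G.t2_ne x
  have hsum : Kf.card + Kn.card = K.card := by
    rw [hKf, hKn]
    exact Finset.card_filter_add_card_filter_not (fun y : G.Flag => y.1 = e)
  have hKfeven : Even Kf.card := by
    obtain ⟨p, hp⟩ := hKeven
    obtain ⟨q, hq⟩ := hKneven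
    exact ⟨p - q, by omega⟩
  have hsub : Kf ⊆ {((e, a, b) : G.Flag), (e, a, !b)} := by
    intro y hy
    obtain ⟨hyK, hye⟩ := Finset.mem_filter.1 hy
    obtain ⟨e', c, d⟩ := y
    obtain rfl : e' = e := hye
    have hc : c = a ∨ c = !a := by cases c <;> cases a <;> simp
    have hd : d = b ∨ d = !b := by cases d <;> cases b <;> simp
    rcases hc with rfl | rfl <;> rcases hd with rfl | rfl
    · simp
    · simp
    · exact absurd ((hmemK _).1 hyK) h2
    · exact absurd ((hmemK _).1 hyK) h4
  have h1K : ((e, a, b) : G.Flag) ∈ Kf :=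
    Finset.mem_filter.2 ⟨(hmemK _).2 (SimpleGraph.Reachable.refl _), rfl⟩
  have hnot : ((e, a, !b) : G.Flag) ∉ Kf := by
    intro hc
    exact h3 ((hmemK _).1 (Finset.mem_filter.1 hc).1)
  have hsub1 : Kf ⊆ {((e, a, b) : G.Flag)} := by
    intro y hy
    rcases Finset.mem_insert.1 (hsub hy) with rfl | h
    · simp
    · rw [Finset.mem_singleton.1 h] at hy
      exact absurd hy hnot
  have hcard1 : Kf.card ≤ 1 := by
    simpa using Finset.card_le_card hsub1
  have hcard0 : 0 < Kf.card := Finset.card_pos.2 ⟨_, h1K⟩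
  obtain ⟨r, hr⟩ := hKfeven
  omega

end RibbonGraph

namespace RibbonGraph

variable {G : RibbonGraph}

lemma hrel_sub_crel (A : Finset G.E) (e : G.E) :
    ∀ x y : G.Flag, G.hrel A e x y → G.crel A x y := by
  intro x y h
  rcases h with h | ⟨hne, h⟩
  · exact Or.inl h
  · by_cases hm : x.1 ∈ A
    · rw [if_pos hm] at h; exact Or.inr (Or.inr ⟨hm, h⟩)
    · rw [if_neg hm] at h; exact Or.inr (Or.inl h)

lemma face_case_N (A : Finset G.E) (e : G.E) (he : e ∉ A)
    (hnr : ¬ (SimpleGraph.fromRel (G.crel A)).Reachable (e, true, true) (e, false, true)) :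
    orbCount (G.frel (insert e A)) + 1 ≤ orbCount (G.frel A) := by
  classical
  have hHC : ∀ {x y : G.Flag}, (SimpleGraph.fromRel (G.hrel A e)).Reachable x y →
      (SimpleGraph.fromRel (G.crel A)).Reachable x y :=
    fun h => KPAux.reach_mono (KPAux.adj_mono_reach (hrel_sub_crel A e)) h
  have h12' : ¬ (SimpleGraph.fromRel (G.hrel A e)).Reachable (e, true, true) (e, false, true) :=
    fun h => hnr (hHC h)
  have h14' : ¬ (SimpleGraph.fromRel (G.hrel A e)).Reachable (e, true, true) (e, false, false) :=
    fun h => hnr ((hHC h).trans (crel_t2_reach A ((e, false, false) : G.Flag)))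
  have hr13 : (SimpleGraph.fromRel (G.hrel A e)).Reachable (e, true, true) (e, true, false) :=
    hreach_flag A e true true h12' h14'
  have h21' : ¬ (SimpleGraph.fromRel (G.hrel A e)).Reachable (e, false, true) (e, true, true) :=
    fun h => h12' h.symm
  have h23' : ¬ (SimpleGraph.fromRel (G.hrel A e)).Reachable (e, false, true) (e, true, false) :=
    fun h => hnr ((crel_t2_reach A ((e, true, true) : G.Flag)).trans (hHC h).symm)
  have hr24 : (SimpleGraph.fromRel (G.hrel A e)).Reachable (e, false, true) (e, false, false) :=
    hreach_flag A e false true h21' h23'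
  have hHA_FA : orbCount (G.hrel A e) ≤ orbCount (G.frel A) := by
    apply KPAux.orbCount_le_of_reach
    intro x y hne h
    rcases h with h | h
    · exact KPAux.fromRel_reach hne (Or.inl h)
    · by_cases hxe : x.1 = e
      · obtain ⟨e', c, d⟩ := x
        obtain rfl : e' = e := hxe
        rw [if_neg he] at h
        subst h
        cases c <;> cases d
        · exact hr24.symm
        · exact hr24
        · exact hr13.symm
        · exact hr13
      · exact KPAux.fromRel_reach hne (Or.inr ⟨hxe, h⟩)
  have hFI_J : orbCount (G.frel (insert e A)) ≤ orbCount (G.jrel A e) := by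
    apply KPAux.orbCount_le_of_reach
    intro x y hne h
    rcases h with (h | ⟨hxe, h⟩) | ⟨rfl, rfl⟩
    · exact KPAux.fromRel_reach hne (Or.inl h)
    · by_cases hm : x.1 ∈ A
      · rw [if_pos hm] at h
        refine KPAux.fromRel_reach hne (Or.inr ?_)
        rw [if_pos (Finset.mem_insert_of_mem hm)]; exact h
      · rw [if_neg hm] at h
        refine KPAux.fromRel_reach hne (Or.inr ?_)
        rw [if_neg (by simp [hxe, hm] : ¬ x.1 ∈ insert e A)]; exact h
    · refine KPAux.fromRel_reach hne (Or.inr ?_)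
      rw [if_pos (show ((e, true, true) : G.Flag).1 ∈ insert e A from
        Finset.mem_insert_self e A)]
      rfl
  have hJ : orbCount (G.jrel A e) + 1 ≤ orbCount (G.hrel A e) := by
    exact KPAux.card_comp_add_edge (G₁ := SimpleGraph.fromRel (G.hrel A e))
      (G₂ := SimpleGraph.fromRel (G.jrel A e))
      (u := ((e, true, true) : G.Flag)) (v := ((e, false, true) : G.Flag))
      (KPAux.adj_mono_reach (fun x y h => Or.inl h))
      (KPAux.fromRel_reach (by simp) (Or.inr ⟨rfl, rfl⟩))
      h12'
  omega

lemma crel_insert_ge (A : Finset G.E) (e : G.E)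
    (hre : (SimpleGraph.fromRel (G.crel A)).Reachable (e, true, true) (e, false, true)) :
    orbCount (G.crel A) ≤ orbCount (G.crel (insert e A)) := by
  apply KPAux.orbCount_le_of_reach
  intro x y hne h
  rcases h with h | h | ⟨hm, h⟩
  · exact KPAux.fromRel_reach hne (Or.inl h)
  · exact KPAux.fromRel_reach hne (Or.inr (Or.inl h))
  · rcases Finset.mem_insert.1 hm with hxe | hmA
    · obtain ⟨e', c, d⟩ := x
      obtain rfl : e' = e := hxe
      subst h
      cases c <;> cases d
      · exact ((crel_t2_reach A ((e', false, false) : G.Flag)).trans hre.symm).trans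
          (crel_t2_reach A ((e', true, true) : G.Flag))
      · exact hre.symm
      · exact ((crel_t2_reach A ((e', true, false) : G.Flag)).trans hre).trans
          (crel_t2_reach A ((e', false, true) : G.Flag))
      · exact hre
    · exact KPAux.fromRel_reach hne (Or.inr (Or.inr ⟨hmA, h⟩))

lemma face_le (A : Finset G.E) (e : G.E) (he : e ∉ A) :
    orbCount (G.frel (insert e A)) ≤ orbCount (G.frel A) + 1 := by
  classical
  have hK_FA : orbCount (G.krel A e) ≤ orbCount (G.frel A) := by
    apply KPAux.orbCount_le_of_reach
    intro x y hne h
    rcases h with h | h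
    · exact KPAux.fromRel_reach hne (Or.inl h)
    · exact KPAux.fromRel_reach hne (Or.inr (Or.inl h))
  have hFI_K : orbCount (G.frel (insert e A)) ≤ orbCount (G.krel A e) + 1 := by
    have ht0adj : ∀ a b : Bool, (SimpleGraph.fromRel (G.frel (insert e A))).Reachable
        ((e, a, b) : G.Flag) (e, !a, b) := by
      intro a b
      refine KPAux.fromRel_reach (by simp) (Or.inr ?_)
      rw [if_pos (show ((e, a, b) : G.Flag).1 ∈ insert e A from Finset.mem_insert_self e A)]
      rfl
    have ht2e : ∀ (x y : G.Flag), x ≠ y → x.1 = e → G.t2 x = y →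
        KPAux.Rel3 (SimpleGraph.fromRel (G.frel (insert e A)))
          ((e, true, true) : G.Flag) ((e, true, false) : G.Flag) x y := by
      intro x y hne hxe h
      obtain ⟨e', c, d⟩ := x
      obtain rfl : e' = e := hxe
      subst h
      cases c <;> cases d
      · exact Or.inr (Or.inr ⟨(ht0adj true false).symm, ht0adj true true⟩)
      · exact Or.inr (Or.inl ⟨(ht0adj true true).symm, ht0adj true false⟩)
      · exact Or.inr (Or.inr ⟨SimpleGraph.Reachable.refl _, SimpleGraph.Reachable.refl _⟩)
      · exact Or.inr (Or.inl ⟨SimpleGraph.Reachable.refl _, SimpleGraph.Reachable.refl _⟩)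
    refine KPAux.card_comp_le_add_one
      (u := ((e, true, true) : G.Flag)) (v := ((e, true, false) : G.Flag))
      (KPAux.adj_mono_reach ?_) (KPAux.rel3_of_rel ?_)
    · intro x y h
      rcases h with h | h
      · exact Or.inl h
      · by_cases hxe : x.1 = e
        · rw [if_pos (by rw [hxe]; exact Finset.mem_insert_self e A)] at h
          exact Or.inr (Or.inr ⟨hxe, Or.inl h⟩)
        · by_cases hm : x.1 ∈ A
          · rw [if_pos (Finset.mem_insert_of_mem hm)] at h
            exact Or.inr (Or.inl (by rw [if_pos hm]; exact h))
          · rw [if_neg (by simp [hxe, hm] : ¬ x.1 ∈ insert e A)] at h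
            exact Or.inr (Or.inl (by rw [if_neg hm]; exact h))
    · intro x y hne h
      rcases h with h | h | ⟨hxe, h⟩
      · exact Or.inl (KPAux.fromRel_reach hne (Or.inl h))
      · by_cases hm : x.1 ∈ A
        · rw [if_pos hm] at h
          exact Or.inl (KPAux.fromRel_reach hne
            (Or.inr (by rw [if_pos (Finset.mem_insert_of_mem hm)]; exact h)))
        · rw [if_neg hm] at h
          by_cases hxe : x.1 = e
          · exact ht2e x y hne hxe h
          · exact Or.inl (KPAux.fromRel_reach hne
              (Or.inr (by rw [if_neg (by simp [hxe, hm] : ¬ x.1 ∈ insert e A)]; exact h)))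
      · rcases h with h | h
        · exact Or.inl (KPAux.fromRel_reach hne
            (Or.inr (by rw [if_pos (by rw [hxe]; exact Finset.mem_insert_self e A)]; exact h)))
        · exact ht2e x y hne hxe h
  omega

lemma orb_euler (A : Finset G.E) :
    orbCount G.vrel + orbCount (G.frel A) ≤ 2 * orbCount (G.crel A) + A.card := by
  classical
  induction A using Finset.induction_on with
  | empty =>
    have h1 := orb_vrel_eq_frel_empty (G := G)
    have h2 := orb_vrel_eq_crel_empty (G := G)
    simp only [Finset.card_empty]
    omega
  | @insert e A he ih =>
    rw [Finset.card_insert_of_notMem he]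
    by_cases hre : (SimpleGraph.fromRel (G.crel A)).Reachable (e, true, true) (e, false, true)
    · have h1 := crel_insert_ge A e hre
      have h2 := face_le A e he
      omega
    · have h1 := orb_crel_le_insert (G := G) A e
      have h2 := face_case_N A e he hre
      omega

lemma euler_ineq (A : Finset G.E) : G.vCount + G.fSub A ≤ 2 * G.cSub A + A.card := by
  rw [vCount_eq, fSub_eq, cSub_eq]
  have := orb_euler (G := G) A
  omega

lemma key_exponent (A : Finset G.E) :
    G.cCount + (G.rank - G.rankSub A) + G.nullSub A = G.fSub A + G.genusSub A := by
  have h1 : G.cCount ≤ G.cSub A := by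
    show G.cSub Finset.univ ≤ G.cSub A
    rw [cSub_eq, cSub_eq]
    exact Nat.add_le_add_right (orb_cG_le_crel A) _
  have h2 : G.cSub A ≤ G.vCount := by
    rw [cSub_eq, vCount_eq]
    exact Nat.add_le_add_right (orb_crel_le_vrel A) _
  have h3 : G.vCount ≤ A.card + G.cSub A := by
    rw [vCount_eq, cSub_eq]
    have := orb_vrel_le (G := G) A
    omega
  have h4 := euler_ineq (G := G) A
  unfold rank rankSub nullSub genusSub
  unfold cCount at *
  omega

end RibbonGraph

namespace RibbonGraph

variable {G : RibbonGraph} {k : ℕ}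

section TypeLemmas

variable {c : G.Flag → Fin k} {e : G.E}

lemma whiteAt_eq (h : G.WhiteAt c e) : ∀ a b : Bool, c (e, a, b) = c (e, !a, b) := by
  obtain ⟨h1, h2⟩ := h
  intro a b
  cases a <;> cases b
  · exact h2.symm
  · exact h1.symm
  · exact h2
  · exact h1

lemma blackAt_eq (h : G.BlackAt c e) : ∀ a b : Bool, c (e, a, b) = c (e, a, !b) := by
  obtain ⟨h1, h2⟩ := h
  intro a b
  cases a <;> cases b
  · exact h2.symm
  · exact h2
  · exact h1.symm
  · exact h1

lemma white_of_total (h : G.TotalAt c e) : G.WhiteAt c e :=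
  ⟨h.1, h.2.1.symm.trans h.2.2⟩

lemma black_of_total (h : G.TotalAt c e) : G.BlackAt c e :=
  ⟨h.2.1, h.1.symm.trans h.2.2⟩

lemma total_of_white_black (hw : G.WhiteAt c e) (hb : G.BlackAt c e) : G.TotalAt c e :=
  ⟨hw.1, hb.1, hb.1.trans hw.2⟩

lemma total_of_white_cross (hw : G.WhiteAt c e) (hc : G.CrossAt c e) : G.TotalAt c e :=
  ⟨hw.1, hw.1.trans hc.2.symm, hc.1⟩

lemma total_of_black_cross (hb : G.BlackAt c e) (hc : G.CrossAt c e) : G.TotalAt c e :=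
  ⟨hb.1.trans hc.2, hb.1, hc.1⟩

end TypeLemmas

lemma frel_adj_t0 {A : Finset G.E} {e : G.E} (hm : e ∈ A) (a b : Bool) :
    (SimpleGraph.fromRel (G.frel A)).Adj (e, a, b) (e, !a, b) := by
  rw [SimpleGraph.fromRel_adj]
  refine ⟨by simp, Or.inl (Or.inr ?_)⟩
  rw [if_pos (show ((e, a, b) : G.Flag).1 ∈ A from hm)]
  rfl

lemma frel_adj_t2 {A : Finset G.E} {e : G.E} (hm : e ∉ A) (a b : Bool) :
    (SimpleGraph.fromRel (G.frel A)).Adj (e, a, b) (e, a, !b) := by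
  rw [SimpleGraph.fromRel_adj]
  refine ⟨by simp, Or.inl (Or.inr ?_)⟩
  rw [if_neg (show ¬ ((e, a, b) : G.Flag).1 ∈ A from hm)]
  rfl

lemma compat_iff (A : Finset G.E) (c : G.Flag → Fin k) :
    ((∀ x, c (G.t1 x) = c x) ∧
        ∀ e : G.E, if e ∈ A then G.WhiteAt c e else G.BlackAt c e)
      ↔ ∀ x y, (SimpleGraph.fromRel (G.frel A)).Adj x y → c x = c y := by
  classical
  constructor
  · rintro ⟨h1, h2⟩ x y hadj
    rw [SimpleGraph.fromRel_adj] at hadj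
    have key : ∀ u w : G.Flag, G.frel A u w → c u = c w := by
      intro u w h
      rcases h with h | h
      · rw [← h]; exact (h1 u).symm
      · obtain ⟨e, a, b⟩ := u
        by_cases hm : e ∈ A
        · rw [if_pos (show ((e, a, b) : G.Flag).1 ∈ A from hm)] at h
          subst h
          have hw := h2 e
          rw [if_pos hm] at hw
          exact whiteAt_eq hw a b
        · rw [if_neg (show ¬ ((e, a, b) : G.Flag).1 ∈ A from hm)] at h
          subst h
          have hb := h2 e
          rw [if_neg hm] at hb
          exact blackAt_eq hb a b
    rcases hadj.2 with h | h
    · exact key x y h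
    · exact (key y x h).symm
  · intro h
    constructor
    · intro x
      exact (h x (G.t1 x) ((SimpleGraph.fromRel_adj _ _ _).2
        ⟨Ne.symm (G.fix1 x), Or.inl (Or.inl rfl)⟩)).symm
    · intro e
      by_cases hm : e ∈ A
      · rw [if_pos hm]
        exact ⟨h _ _ (frel_adj_t0 hm true true), h _ _ (frel_adj_t0 hm true false)⟩
      · rw [if_neg hm]
        exact ⟨h _ _ (frel_adj_t2 hm true true), h _ _ (frel_adj_t2 hm false true)⟩

lemma card_compat (A : Finset G.E) (k : ℕ) :
    (Finset.univ.filter fun φ : (G.Flag → Fin k) × (Fin G.isolated → Fin k) =>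
        (∀ x, φ.1 (G.t1 x) = φ.1 x) ∧
          ∀ e : G.E, if e ∈ A then G.WhiteAt φ.1 e else G.BlackAt φ.1 e).card
      = k ^ G.fSub A := by
  classical
  rw [← Fintype.card_subtype, ← Nat.card_eq_fintype_card]
  have e1 : {φ : (G.Flag → Fin k) × (Fin G.isolated → Fin k) //
      (∀ x, φ.1 (G.t1 x) = φ.1 x) ∧
        ∀ e : G.E, if e ∈ A then G.WhiteAt φ.1 e else G.BlackAt φ.1 e}
      ≃ {c : G.Flag → Fin k //
          (∀ x, c (G.t1 x) = c x) ∧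
            ∀ e : G.E, if e ∈ A then G.WhiteAt c e else G.BlackAt c e}
        × (Fin G.isolated → Fin k) :=
    { toFun := fun φ => (⟨φ.1.1, φ.2⟩, φ.1.2)
      invFun := fun q => ⟨(q.1.1, q.2), q.1.2⟩
      left_inv := fun φ => rfl
      right_inv := fun q => rfl }
  rw [Nat.card_congr e1, Nat.card_prod]
  have e2 : Nat.card {c : G.Flag → Fin k //
      (∀ x, c (G.t1 x) = c x) ∧
        ∀ e : G.E, if e ∈ A then G.WhiteAt c e else G.BlackAt c e}
      = k ^ orbCount (G.frel A) := by
    rw [Nat.card_congr (Equiv.subtypeEquivRight (fun c => compat_iff A c))]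
    exact KPAux.card_respects _ k
  rw [e2]
  have e3 : Nat.card (Fin G.isolated → Fin k) = k ^ G.isolated := by
    rw [Nat.card_fun]
    simp
  rw [e3, fSub_eq, pow_add]

lemma sum_kvalsR (G : RibbonGraph) (k : ℕ) :
    ∑ φ ∈ G.kvalsR k, 2 ^ G.totalCount φ.1 =
      ∑ A : Finset G.E,
        (Finset.univ.filter fun φ : (G.Flag → Fin k) × (Fin G.isolated → Fin k) =>
          (∀ x, φ.1 (G.t1 x) = φ.1 x) ∧
            ∀ e : G.E, if e ∈ A then G.WhiteAt φ.1 e else G.BlackAt φ.1 e).card := by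
  classical
  have key : ∀ φ : (G.Flag → Fin k) × (Fin G.isolated → Fin k),
      (Finset.univ.filter fun A : Finset G.E =>
        (∀ x, φ.1 (G.t1 x) = φ.1 x) ∧
          ∀ e : G.E, if e ∈ A then G.WhiteAt φ.1 e else G.BlackAt φ.1 e).card
      = if G.IsValuation φ.1 ∧ ∀ e : G.E, ¬ (G.CrossAt φ.1 e ∧ ¬ G.TotalAt φ.1 e)
        then 2 ^ G.totalCount φ.1 else 0 := by
    intro φ
    by_cases hφ : G.IsValuation φ.1 ∧ ∀ e : G.E, ¬ (G.CrossAt φ.1 e ∧ ¬ G.TotalAt φ.1 e)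
    · rw [if_pos hφ]
      obtain ⟨⟨hval1, hval2⟩, hperm⟩ := hφ
      set W : Finset G.E :=
        Finset.univ.filter (fun e => G.WhiteAt φ.1 e ∧ ¬ G.TotalAt φ.1 e) with hW
      set T : Finset G.E := Finset.univ.filter (fun e => G.TotalAt φ.1 e) with hT
      have hWT : Disjoint W T := by
        rw [Finset.disjoint_left]
        intro a haW haT
        exact (Finset.mem_filter.1 haW).2.2 (Finset.mem_filter.1 haT).2
      have hiff : ∀ A : Finset G.E,
          ((∀ x, φ.1 (G.t1 x) = φ.1 x) ∧
            ∀ e : G.E, if e ∈ A then G.WhiteAt φ.1 e else G.BlackAt φ.1 e)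
          ↔ (W ⊆ A ∧ A ⊆ W ∪ T) := by
        intro A
        constructor
        · rintro ⟨h1, h2⟩
          constructor
          · intro a haW
            obtain ⟨hw, hnt⟩ := (Finset.mem_filter.1 haW).2
            by_contra hna
            have hb := h2 a
            rw [if_neg hna] at hb
            exact hnt (total_of_white_black hw hb)
          · intro a haA
            have hw := h2 a
            rw [if_pos haA] at hw
            by_cases ht : G.TotalAt φ.1 a
            · exact Finset.mem_union_right _ (Finset.mem_filter.2 ⟨Finset.mem_univ _, ht⟩)
            · exact Finset.mem_union_left _
                (Finset.mem_filter.2 ⟨Finset.mem_univ _, hw, ht⟩)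
        · rintro ⟨hWA, hAWT⟩
          refine ⟨hval1, fun e => ?_⟩
          by_cases hm : e ∈ A
          · rw [if_pos hm]
            rcases Finset.mem_union.1 (hAWT hm) with h | h
            · exact ((Finset.mem_filter.1 h).2).1
            · exact white_of_total ((Finset.mem_filter.1 h).2)
          · rw [if_neg hm]
            by_cases ht : G.TotalAt φ.1 e
            · exact black_of_total ht
            · have hnw : ¬ G.WhiteAt φ.1 e := fun hw =>
                hm (hWA (Finset.mem_filter.2 ⟨Finset.mem_univ _, hw, ht⟩))
              rcases hval2 e with h | h | h
              · exact absurd h hnw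
              · exact h
              · exact absurd ⟨h, ht⟩ (hperm e)
      have himg : (Finset.univ.filter fun A : Finset G.E =>
          (∀ x, φ.1 (G.t1 x) = φ.1 x) ∧
            ∀ e : G.E, if e ∈ A then G.WhiteAt φ.1 e else G.BlackAt φ.1 e)
          = T.powerset.image (fun S => W ∪ S) := by
        ext A
        simp only [Finset.mem_filter, Finset.mem_univ, true_and, Finset.mem_image,
          Finset.mem_powerset]
        rw [hiff A]
        constructor
        · rintro ⟨hWA, hAWT⟩
          refine ⟨A \ W, ?_, Finset.union_sdiff_of_subset hWA⟩
          intro a ha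
          obtain ⟨haA, hanW⟩ := Finset.mem_sdiff.1 ha
          rcases Finset.mem_union.1 (hAWT haA) with h | h
          · exact absurd h hanW
          · exact h
        · rintro ⟨S, hST, rfl⟩
          exact ⟨Finset.subset_union_left, Finset.union_subset_union_right hST⟩
      have hinj : Set.InjOn (fun S => W ∪ S) T.powerset := by
        intro S1 h1 S2 h2 hu
        have hS1 : S1 ⊆ T := Finset.mem_powerset.1 h1
        have hS2 : S2 ⊆ T := Finset.mem_powerset.1 h2
        calc S1 = (W ∪ S1) \ W :=
              (Finset.union_sdiff_cancel_left (hWT.mono_right hS1)).symm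
          _ = (W ∪ S2) \ W := by rw [show W ∪ S1 = W ∪ S2 from hu]
          _ = S2 := Finset.union_sdiff_cancel_left (hWT.mono_right hS2)
      rw [himg, Finset.card_image_of_injOn hinj, Finset.card_powerset, hT]
      rfl
    · rw [if_neg hφ, Finset.card_eq_zero, Finset.filter_eq_empty_iff]
      intro A _
      intro hP
      apply hφ
      obtain ⟨h1, h2⟩ := hP
      refine ⟨⟨h1, fun e => ?_⟩, fun e => ?_⟩
      · by_cases hm : e ∈ A
        · have := h2 e; rw [if_pos hm] at this; exact Or.inl this
        · have := h2 e; rw [if_neg hm] at this; exact Or.inr (Or.inl this)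
      · rintro ⟨hc, hnt⟩
        by_cases hm : e ∈ A
        · have := h2 e; rw [if_pos hm] at this; exact hnt (total_of_white_cross this hc)
        · have := h2 e; rw [if_neg hm] at this; exact hnt (total_of_black_cross this hc)
  calc ∑ φ ∈ G.kvalsR k, 2 ^ G.totalCount φ.1
      = ∑ φ : (G.Flag → Fin k) × (Fin G.isolated → Fin k),
          if G.IsValuation φ.1 ∧ ∀ e : G.E, ¬ (G.CrossAt φ.1 e ∧ ¬ G.TotalAt φ.1 e)
          then 2 ^ G.totalCount φ.1 else 0 := by
        rw [kvalsR, Finset.sum_filter]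
    _ = ∑ φ : (G.Flag → Fin k) × (Fin G.isolated → Fin k),
          (Finset.univ.filter fun A : Finset G.E =>
            (∀ x, φ.1 (G.t1 x) = φ.1 x) ∧
              ∀ e : G.E, if e ∈ A then G.WhiteAt φ.1 e else G.BlackAt φ.1 e).card :=
        Finset.sum_congr rfl (fun φ _ => (key φ).symm)
    _ = ∑ φ : (G.Flag → Fin k) × (Fin G.isolated → Fin k), ∑ A : Finset G.E,
          if (∀ x, φ.1 (G.t1 x) = φ.1 x) ∧
              ∀ e : G.E, if e ∈ A then G.WhiteAt φ.1 e else G.BlackAt φ.1 e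
          then 1 else 0 := by
        simp only [Finset.card_filter]
    _ = ∑ A : Finset G.E, ∑ φ : (G.Flag → Fin k) × (Fin G.isolated → Fin k),
          if (∀ x, φ.1 (G.t1 x) = φ.1 x) ∧
              ∀ e : G.E, if e ∈ A then G.WhiteAt φ.1 e else G.BlackAt φ.1 e
          then 1 else 0 := Finset.sum_comm
    _ = _ := by
        simp only [Finset.card_filter]

end RibbonGraph

/-- **Theorem (Korn–Pak).** For an embedded graph `G` and a natural number `k`,
`k^{c(G)} · R(G; k+1, k, 1/k) = Σ_{φ ∈ R(G_m,k)} 2^{total(φ)}`, the sum being over all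
`R`-permissible `k`-valuations of the canonically checkerboard coloured medial graph. -/
theorem KornPak_BR_eq_sum (G : RibbonGraph) (k : ℕ) (hk : 0 < k) :
    (k : ℚ) ^ G.cCount * G.BR ((k : ℚ) + 1) (k : ℚ) ((k : ℚ))⁻¹ =
      ∑ φ ∈ G.kvalsR k, 2 ^ G.totalCount φ.1 := by
  classical
  have hk0 : (k : ℚ) ≠ 0 := Nat.cast_ne_zero.2 hk.ne'
  have hnat : (∑ φ ∈ G.kvalsR k, 2 ^ G.totalCount φ.1 : ℕ)
      = ∑ A : Finset G.E, k ^ G.fSub A := by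
    rw [RibbonGraph.sum_kvalsR]
    exact Finset.sum_congr rfl (fun A _ => RibbonGraph.card_compat A k)
  have hrhs : (∑ φ ∈ G.kvalsR k, (2 : ℚ) ^ G.totalCount φ.1)
      = ∑ A : Finset G.E, (k : ℚ) ^ G.fSub A := by
    exact_mod_cast congrArg (fun n : ℕ => (n : ℚ)) hnat
  rw [hrhs]
  unfold RibbonGraph.BR
  rw [Finset.mul_sum]
  apply Finset.sum_congr rfl
  intro A _
  have hkey := RibbonGraph.key_exponent (G := G) A
  have hsimp : ((k : ℚ) + 1 - 1) = (k : ℚ) := by ring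
  rw [hsimp]
  calc (k : ℚ) ^ G.cCount *
        ((k : ℚ) ^ (G.rank - G.rankSub A) * (k : ℚ) ^ G.nullSub A *
          ((k : ℚ))⁻¹ ^ G.genusSub A)
      = (k : ℚ) ^ (G.cCount + (G.rank - G.rankSub A) + G.nullSub A) *
          ((k : ℚ))⁻¹ ^ G.genusSub A := by
        rw [pow_add, pow_add]; ring
    _ = (k : ℚ) ^ (G.fSub A + G.genusSub A) * ((k : ℚ))⁻¹ ^ G.genusSub A := by rw [hkey]
    _ = (k : ℚ) ^ G.fSub A := by
        rw [pow_add, mul_assoc, ← mul_pow, mul_inv_cancel₀ hk0, one_pow, mul_one]
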